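/- (Generating function for the i-th family of generalized Gould–Hopper polynomials.) Fix integers d ≥ 0, l ≥ 1, i with 0 ≤ i ≤ l−1, and complex parameters α_1,…,α_d; assume no element of Ŝ(i) is a nonpositive integer. Define the polynomials Q_{ml+i}(x) = x^i · Σ_{j=0}^m [(−m)_j / (∏_{β∈I} (S_β(i))_j · j!)] · (−x^l)^j for m ≥ 0. Then the following identity of formal power series in t with coefficients in ℂ[x] holds: Σ_{m=0}^∞ Q_{ml+i}(x) · t^{ml+i}/m! = (xt)^i · (Σ_{s=0}^∞ t^{ls}/s!) · (Σ_{j=0}^∞ (xt)^{lj} / (∏_{β∈I} (S_β(i))_j · j!)). Equivalently, Φ_i(x,t) = (tx)^i e^{t^l} · 0F_{ld+l−1}(—; Ŝ(i); (xt)^l) generates the family {Q_{ml+i}}. -/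

import Mathlib

open Polynomial

/-- Pochhammer symbol `(a)_j = a(a+1)⋯(a+j−1)`. -/
noncomputable def poch (a : ℂ) (j : ℕ) : ℂ := ∏ s ∈ Finset.range j, (a + s)

lemma poch_neg_nat (m : ℕ) : ∀ j, j ≤ m →
    poch (-(m:ℂ)) j * (-1)^j * ((m-j).factorial : ℂ) = (m.factorial : ℂ) := by
  intro j
  induction j with
  | zero => intro _; simp [poch]
  | succ j ih =>
    intro hj
    have hjm : j ≤ m := by omega
    have h2 : m - j = (m - (j+1)) + 1 := by omega
    have h4 : ((m - j).factorial : ℂ) = ((m:ℂ) - j) * ((m - (j+1)).factorial : ℂ) := by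
      rw [h2, Nat.factorial_succ, ← h2]
      push_cast [Nat.cast_sub hjm]
      ring
    have hp : poch (-(m:ℂ)) (j+1) = poch (-(m:ℂ)) j * (-(m:ℂ) + j) :=
      Finset.prod_range_succ _ _
    calc poch (-(m:ℂ)) (j+1) * (-1)^(j+1) * ((m - (j+1)).factorial : ℂ)
        = poch (-(m:ℂ)) j * (-1)^j * (((m:ℂ) - j) * ((m-(j+1)).factorial : ℂ)) := by
          rw [hp]; ring
      _ = poch (-(m:ℂ)) j * (-1)^j * ((m - j).factorial : ℂ) := by rw [h4]
      _ = m.factorial := ih hjm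


/-- Generating function for the `i`-th family of generalized Gould–Hopper polynomials:
`Σ_m Q_{ml+i}(x) t^{ml+i}/m! = (xt)^i · e^{t^l} · 0F_{ld+l−1}(—; Ŝ(i); (xt)^l)`,
as an identity of formal power series in `t` with coefficients in `ℂ[x]`. -/
theorem stmt17 (d : ℕ) (α : ℕ → ℂ) (l : ℕ) (hl : 1 ≤ l) (i : ℕ) (hi : i < l) :
    let A : ℕ → ℂ := fun k => if k < d then α k else 0
    let S : ℕ × ℕ → ℂ := fun kr => (A kr.1 + i - kr.2) / (l : ℂ) + 1
    let Ihat : Finset (ℕ × ℕ) := (Finset.range (d + 1) ×ˢ Finset.range l).erase (d, i)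
    -- `Q_{ml+i}(x) = x^i Σ_{j=0}^m (−m)_j/(∏_{β∈I}(S_β(i))_j j!) (−x^l)^j`
    let Q : ℕ → Polynomial ℂ := fun m =>
      Polynomial.X ^ i * ∑ j ∈ Finset.range (m + 1),
        ((poch (-(m : ℂ)) j * (-1 : ℂ) ^ j)
            / ((∏ kr ∈ Ihat, poch (S kr) j) * (j.factorial : ℂ)))
          • Polynomial.X ^ (l * j)
    (∀ kr ∈ Ihat, ∀ s : ℕ, S kr ≠ -(s : ℂ)) →
    -- LHS: `Σ_{m=0}^∞ Q_{ml+i}(x) t^{ml+i}/m!`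
    (PowerSeries.mk fun N : ℕ =>
        if N % l = i then (((N / l).factorial : ℂ))⁻¹ • Q (N / l) else 0)
      -- `(xt)^i`
      = (PowerSeries.C (R := Polynomial ℂ) Polynomial.X * PowerSeries.X) ^ i
        -- `e^{t^l} = Σ_s t^{ls}/s!`
        * (PowerSeries.mk fun N : ℕ =>
            if N % l = 0 then Polynomial.C ((((N / l).factorial : ℂ))⁻¹) else 0)
        -- `Σ_j (xt)^{lj}/(∏_{β∈I}(S_β(i))_j j!)`
        * (PowerSeries.mk fun N : ℕ =>
            if N % l = 0 then
              (((∏ kr ∈ Ihat, poch (S kr) (N / l)) * (((N / l).factorial : ℂ)))⁻¹)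
                • Polynomial.X ^ N
            else 0) := by
  intro A S Ihat Q _hS
  have hl0 : 0 < l := hl
  set P : ℕ → ℂ := fun j => ∏ kr ∈ Ihat, poch (S kr) j with hP
  set E : PowerSeries (Polynomial ℂ) := PowerSeries.mk fun N : ℕ =>
      if N % l = 0 then Polynomial.C ((((N / l).factorial : ℂ))⁻¹) else 0 with hE
  set F : PowerSeries (Polynomial ℂ) := PowerSeries.mk fun N : ℕ =>
      if N % l = 0 then ((P (N / l) * (((N / l).factorial : ℂ)))⁻¹) • Polynomial.X ^ N
      else 0 with hF
  -- key computation of coefficients of E * F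
  have key : ∀ M : ℕ, (PowerSeries.coeff M) (E * F) =
      if M % l = 0 then ∑ j ∈ Finset.range (M / l + 1),
        Polynomial.C (((M / l - j).factorial : ℂ)⁻¹) *
          ((P j * (j.factorial : ℂ))⁻¹ • Polynomial.X ^ (l * j))
      else 0 := by
    intro M
    rw [PowerSeries.coeff_mul]
    simp only [hE, hF, PowerSeries.coeff_mk]
    by_cases hM : M % l = 0
    · rw [if_pos hM]
      obtain ⟨m, rfl⟩ : ∃ m, M = l * m :=
        ⟨M / l, (Nat.mul_div_cancel' (Nat.dvd_of_mod_eq_zero hM)).symm⟩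
      have hml : (l * m) / l = m := Nat.mul_div_cancel_left m hl0
      rw [hml]
      have hsub : ((Finset.HasAntidiagonal.antidiagonal m).image fun q : ℕ × ℕ => (l * q.1, l * q.2)) ⊆
          Finset.HasAntidiagonal.antidiagonal (l * m) := by
        intro p hp
        simp only [Finset.mem_image, Finset.HasAntidiagonal.mem_antidiagonal] at hp ⊢
        obtain ⟨q, hq, rfl⟩ := hp
        rw [← Nat.mul_add, hq]
      rw [← Finset.sum_subset hsub (by
        rintro ⟨p1, p2⟩ hp hnp
        simp only [Finset.HasAntidiagonal.mem_antidiagonal] at hp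
        by_cases h1 : p1 % l = 0
        · by_cases h2 : p2 % l = 0
          · exfalso
            apply hnp
            simp only [Finset.mem_image, Finset.HasAntidiagonal.mem_antidiagonal]
            refine ⟨(p1 / l, p2 / l), ?_, ?_⟩
            · have : l * (p1 / l) + l * (p2 / l) = l * m := by
                rw [Nat.mul_div_cancel' (Nat.dvd_of_mod_eq_zero h1),
                  Nat.mul_div_cancel' (Nat.dvd_of_mod_eq_zero h2), hp]
              exact Nat.eq_of_mul_eq_mul_left hl0 (by rw [← Nat.mul_add] at this; exact this)
            · simp [Nat.mul_div_cancel' (Nat.dvd_of_mod_eq_zero h1),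
                Nat.mul_div_cancel' (Nat.dvd_of_mod_eq_zero h2)]
          · simp [h2]
        · simp [h1])]
      rw [Finset.sum_image (by
        rintro ⟨a, b⟩ _ ⟨c, e⟩ _ h
        simp only [Prod.mk.injEq] at h
        exact Prod.ext (Nat.eq_of_mul_eq_mul_left hl0 h.1)
          (Nat.eq_of_mul_eq_mul_left hl0 h.2))]
      rw [Finset.Nat.sum_antidiagonal_eq_sum_range_succ_mk]
      rw [← Finset.sum_range_reflect]
      refine Finset.sum_congr rfl fun j hj => ?_
      have hjm : j ≤ m := Nat.lt_succ_iff.mp (Finset.mem_range.mp hj)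
      have e1 : m + 1 - 1 - j = m - j := by omega
      have e2 : m - (m - j) = j := by omega
      rw [e1, e2]
      simp [Nat.mul_mod_right, Nat.mul_div_cancel_left _ hl0]
    · rw [if_neg hM]
      refine Finset.sum_eq_zero fun p hp => ?_
      rw [Finset.HasAntidiagonal.mem_antidiagonal] at hp
      by_cases h1 : p.1 % l = 0
      · by_cases h2 : p.2 % l = 0
        · exfalso; apply hM; rw [← hp, Nat.add_mod, h1, h2]; simp
        · simp [h2]
      · simp [h1]
  -- main comparison of coefficients
  refine PowerSeries.ext fun N => ?_
  rw [show (PowerSeries.C (R := Polynomial ℂ) Polynomial.X * PowerSeries.X) ^ i * E * F =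
      PowerSeries.C (R := Polynomial ℂ) (Polynomial.X ^ i) * (PowerSeries.X ^ i * (E * F)) by
    rw [mul_pow, map_pow]; ring]
  rw [PowerSeries.coeff_mk, PowerSeries.coeff_C_mul, PowerSeries.coeff_X_pow_mul']
  by_cases hN : N % l = i
  · rw [if_pos hN]
    have hiN : i ≤ N := hN ▸ Nat.mod_le N l
    have hdm : l * (N / l) + i = N := by
      conv_rhs => rw [← Nat.div_add_mod N l, hN]
    set m := N / l with hm
    have hNi : N - i = l * m := by omega
    have hNil : (N - i) % l = 0 := by rw [hNi]; exact Nat.mul_mod_right _ _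
    rw [if_pos hiN, key, if_pos hNil]
    have hNidiv : (N - i) / l = m := by rw [hNi]; exact Nat.mul_div_cancel_left m hl0
    rw [hNidiv]
    simp only [Q]
    rw [Finset.mul_sum, Finset.mul_sum, Finset.smul_sum]
    refine Finset.sum_congr rfl fun j hj => ?_
    have hjm : j ≤ m := Nat.lt_succ_iff.mp (Finset.mem_range.mp hj)
    have hfacm : ((m.factorial : ℂ)) ≠ 0 := Nat.cast_ne_zero.mpr (Nat.factorial_ne_zero _)
    have hfacmj : (((m - j).factorial : ℂ)) ≠ 0 := Nat.cast_ne_zero.mpr (Nat.factorial_ne_zero _)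
    have hpoch := poch_neg_nat m j hjm
    have hscal : (m.factorial : ℂ)⁻¹ *
        ((poch (-(m : ℂ)) j * (-1 : ℂ) ^ j) / (P j * (j.factorial : ℂ)))
        = ((m - j).factorial : ℂ)⁻¹ * (P j * (j.factorial : ℂ))⁻¹ := by
      have ha : poch (-(m:ℂ)) j * (-1)^j = (m.factorial : ℂ) * ((m - j).factorial : ℂ)⁻¹ := by
        exact (eq_mul_inv_iff_mul_eq₀ hfacmj).mpr hpoch
      rw [div_eq_mul_inv, ha]
      calc (m.factorial : ℂ)⁻¹ * ((m.factorial : ℂ) * ((m - j).factorial : ℂ)⁻¹ *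
              (P j * (j.factorial : ℂ))⁻¹)
          = ((m.factorial : ℂ)⁻¹ * (m.factorial : ℂ)) *
              (((m - j).factorial : ℂ)⁻¹ * (P j * (j.factorial : ℂ))⁻¹) := by ring
        _ = ((m - j).factorial : ℂ)⁻¹ * (P j * (j.factorial : ℂ))⁻¹ := by
            rw [inv_mul_cancel₀ hfacm, one_mul]
    simp only [Polynomial.smul_eq_C_mul]
    calc Polynomial.C (m.factorial : ℂ)⁻¹ * (Polynomial.X ^ i *
            (Polynomial.C ((poch (-(m : ℂ)) j * (-1 : ℂ) ^ j) / (P j * (j.factorial : ℂ))) *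
              Polynomial.X ^ (l * j)))
        = Polynomial.C ((m.factorial : ℂ)⁻¹ *
            ((poch (-(m : ℂ)) j * (-1 : ℂ) ^ j) / (P j * (j.factorial : ℂ)))) *
            (Polynomial.X ^ i * Polynomial.X ^ (l * j)) := by rw [map_mul]; ring
      _ = Polynomial.C (((m - j).factorial : ℂ)⁻¹ * (P j * (j.factorial : ℂ))⁻¹) *
            (Polynomial.X ^ i * Polynomial.X ^ (l * j)) := by rw [hscal]
      _ = Polynomial.X ^ i * (Polynomial.C (((m - j).factorial : ℂ)⁻¹) *
            (Polynomial.C ((P j * (j.factorial : ℂ))⁻¹) * Polynomial.X ^ (l * j))) := by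
          rw [map_mul]; ring
  · rw [if_neg hN]
    by_cases hiN : i ≤ N
    · rw [if_pos hiN, key, if_neg, mul_zero]
      intro h0
      apply hN
      obtain ⟨k, hk⟩ := Nat.dvd_of_mod_eq_zero h0
      have hNk : N = l * k + i := by omega
      rw [hNk, Nat.mul_add_mod, Nat.mod_eq_of_lt hi]
    · rw [if_neg hiN, mul_zero]
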